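/- arXiv:2404.05350 — 2 statements merged into one kernel-verified Lean document; each statement's English description precedes it below -/
import Mathlib

section
/- Let F : ℝ^d → Y be a measurable classifier into a finite label set Y, and define the smoothed classifier G(x) = argmax over c of P[F(x+ε)=c] where ε ~ N(0, σ²I). Suppose for a point x there is a class c_A and bounds p_A, p_B ∈ [0,1] with P[F(x+ε)=c_A] ≥ p_A ≥ p_B ≥ max_{c≠c_A} P[F(x+ε)=c]. Then for every perturbation δ with ‖δ‖₂ < R := (σ/2)(Φ⁻¹(p_A) − Φ⁻¹(p_B)), we have G(x+δ) = c_A, where Φ⁻¹ is the inverse standard Gaussian CDF. -/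
open MeasureTheory ProbabilityTheory Set Filter Topology ENNReal
open scoped NNReal

noncomputable def Phi (t : ℝ) : ℝ := ((gaussianReal 0 1) (Set.Iic t)).toReal

noncomputable def PhiInv (p : ℝ) : ℝ := Function.invFun Phi p

instance gaussσ_prob (c σ : ℝ) : IsProbabilityMeasure (gaussianReal c ⟨σ ^ 2, sq_nonneg σ⟩) :=
  instIsProbabilityMeasureGaussianReal c _

lemma g1_singleton (t : ℝ) : gaussianReal 0 1 {t} = 0 := by
  rw [gaussianReal_apply 0 one_ne_zero]
  simp

lemma Phi_eq_ofReal (t : ℝ) : gaussianReal 0 1 (Set.Iic t) = ENNReal.ofReal (Phi t) := by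
  rw [Phi, ENNReal.ofReal_toReal (measure_ne_top _ _)]

lemma Phi_nonneg (t : ℝ) : 0 ≤ Phi t := ENNReal.toReal_nonneg

lemma Phi_add_Ioc {a b : ℝ} (hab : a ≤ b) :
    Phi b = Phi a + ((gaussianReal 0 1) (Set.Ioc a b)).toReal := by
  rw [Phi, Phi, ← ENNReal.toReal_add (measure_ne_top _ _) (measure_ne_top _ _),
    ← measure_union (by rw [Set.disjoint_left]; rintro x hx ⟨h1, -⟩; exact absurd hx (not_le.2 h1))
      measurableSet_Ioc, Set.Iic_union_Ioc_eq_Iic hab]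

lemma Phi_strictMono : StrictMono Phi := by
  intro a b hab
  rw [Phi_add_Ioc hab.le, lt_add_iff_pos_right]
  have h : gaussianReal 0 1 (Set.Ioc a b) ≠ 0 := by
    intro h0
    have := gaussianReal_absolutelyContinuous' 0 one_ne_zero h0
    rw [Real.volume_Ioc] at this
    simp [ENNReal.ofReal_eq_zero, hab] at this
    linarith
  exact ENNReal.toReal_pos h (measure_ne_top _ _)

lemma gaussianPDFReal_le_one (x : ℝ) : gaussianPDFReal 0 1 x ≤ 1 := by
  rw [gaussianPDFReal]
  simp only [NNReal.coe_one, mul_one, sub_zero]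
  have h1 : Real.exp (-x ^ 2 / 2) ≤ 1 := by
    rw [Real.exp_le_one_iff]
    nlinarith [sq_nonneg x]
  have h2 : (Real.sqrt (2 * Real.pi))⁻¹ ≤ 1 := by
    rw [inv_le_one_iff₀]
    right
    nlinarith [Real.sq_sqrt (by positivity : (0:ℝ) ≤ 2 * Real.pi), Real.sqrt_nonneg (2 * Real.pi),
      Real.pi_gt_three]
  calc (Real.sqrt (2 * Real.pi))⁻¹ * Real.exp (-x ^ 2 / 2)
      ≤ 1 * 1 := mul_le_mul h2 h1 (Real.exp_nonneg _) zero_le_one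
    _ = 1 := by ring

lemma Phi_lipschitz : LipschitzWith 1 Phi := by
  have key : ∀ a b : ℝ, a ≤ b → Phi b - Phi a ≤ b - a := by
    intro a b hab
    have h1 : gaussianReal 0 1 (Set.Ioc a b) ≤ ENNReal.ofReal (b - a) := by
      rw [gaussianReal_apply 0 one_ne_zero, ← Real.volume_Ioc]
      calc ∫⁻ x in Set.Ioc a b, gaussianPDF 0 1 x
          ≤ ∫⁻ _ in Set.Ioc a b, 1 := by
            refine setLIntegral_mono measurable_const (fun x _ => ?_)
            rw [gaussianPDF_def]
            exact ENNReal.ofReal_le_one.2 (gaussianPDFReal_le_one x)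
          _ = volume (Set.Ioc a b) := by simp
    rw [Phi_add_Ioc hab]
    have h2 : ((gaussianReal 0 1) (Set.Ioc a b)).toReal ≤ b - a := by
      have := ENNReal.toReal_mono ENNReal.ofReal_ne_top h1
      rwa [ENNReal.toReal_ofReal (by linarith)] at this
    linarith
  refine LipschitzWith.of_dist_le_mul (fun a b => ?_)
  rw [NNReal.coe_one, one_mul, Real.dist_eq, Real.dist_eq, abs_sub_le_iff]
  rcases le_total a b with h | h
  · constructor
    · have := Phi_strictMono.monotone h
      have habs : b - a ≤ |a - b| := by rw [abs_sub_comm]; exact le_abs_self _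
      linarith
    · have := key a b h
      have habs : b - a ≤ |a - b| := by rw [abs_sub_comm]; exact le_abs_self _
      linarith
  · constructor
    · have := key b a h
      have habs : a - b ≤ |a - b| := le_abs_self _
      linarith
    · have := Phi_strictMono.monotone h
      have habs : a - b ≤ |a - b| := le_abs_self _
      linarith

lemma Phi_continuous : Continuous Phi := Phi_lipschitz.continuous

lemma g1_map_neg : (gaussianReal 0 1).map (fun x : ℝ => -x) = gaussianReal 0 1 := by
  have h := gaussianReal_map_const_mul (μ := 0) (v := 1) (-1)
  have h2 : NNReal.mk ((-1:ℝ)^2) (sq_nonneg _) * 1 = 1 := by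
    apply NNReal.coe_injective; norm_num
  rw [h2] at h
  simp only [mul_zero, neg_one_mul] at h
  exact h

lemma g1_Iic_eq_Iio (t : ℝ) : gaussianReal 0 1 (Set.Iic t) = gaussianReal 0 1 (Set.Iio t) := by
  refine le_antisymm ?_ (measure_mono Set.Iio_subset_Iic_self)
  have : Set.Iic t ⊆ Set.Iio t ∪ {t} := by
    intro x hx
    rcases lt_or_eq_of_le (Set.mem_Iic.1 hx) with h | h
    · exact Or.inl h
    · exact Or.inr h
  calc gaussianReal 0 1 (Set.Iic t) ≤ gaussianReal 0 1 (Set.Iio t ∪ {t}) := measure_mono this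
    _ ≤ gaussianReal 0 1 (Set.Iio t) + gaussianReal 0 1 {t} := measure_union_le _ _
    _ = gaussianReal 0 1 (Set.Iio t) := by rw [g1_singleton, add_zero]

lemma Phi_neg (t : ℝ) : Phi (-t) = 1 - Phi t := by
  have h1 : gaussianReal 0 1 (Set.Iic (-t)) = gaussianReal 0 1 (Set.Ici t) := by
    conv_lhs => rw [← g1_map_neg]
    rw [Measure.map_apply measurable_neg measurableSet_Iic]
    congr 1
    ext x
    simp [neg_le_neg_iff]
  have h2 : gaussianReal 0 1 (Set.Ici t) = 1 - gaussianReal 0 1 (Set.Iio t) := by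
    rw [← Set.compl_Iio, measure_compl measurableSet_Iio (measure_ne_top _ _)]
    congr 1
    exact measure_univ
  rw [Phi, h1, h2, ← g1_Iic_eq_Iio, ENNReal.toReal_sub_of_le prob_le_one one_ne_top]
  simp [Phi]

lemma Phi_tendsto_atTop : Tendsto Phi atTop (𝓝 1) := by
  have h := tendsto_measure_Iic_atTop (gaussianReal 0 1)
  rw [measure_univ] at h
  have := (ENNReal.tendsto_toReal one_ne_top).comp h
  exact this

lemma Phi_tendsto_atBot : Tendsto Phi atBot (𝓝 0) := by
  have h1 : Tendsto (fun t : ℝ => -t) atBot atTop := tendsto_neg_atBot_atTop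
  have h2 : Tendsto (fun t : ℝ => Phi (-t)) atBot (𝓝 1) := Phi_tendsto_atTop.comp h1
  have h3 : Tendsto (fun t : ℝ => 1 - Phi (-t)) atBot (𝓝 (1 - 1)) :=
    tendsto_const_nhds.sub h2
  have h4 : (fun t : ℝ => 1 - Phi (-t)) = Phi := by
    funext t
    rw [← neg_neg t, Phi_neg (-t)]
    ring_nf
  rw [h4] at h3
  simpa using h3

lemma Phi_exists_eq {p : ℝ} (hp : p ∈ Set.Ioo (0:ℝ) 1) : ∃ t, Phi t = p := by
  obtain ⟨a, ha⟩ := (Phi_tendsto_atBot.eventually_lt_const hp.1).exists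
  obtain ⟨b, hb⟩ := (Phi_tendsto_atTop.eventually_const_lt hp.2).exists
  have hab : a ≤ b := by
    by_contra h
    push_neg at h
    have := Phi_strictMono h
    linarith
  have : p ∈ Set.Icc (Phi a) (Phi b) := ⟨ha.le, hb.le⟩
  obtain ⟨t, -, ht⟩ := intermediate_value_Icc hab Phi_continuous.continuousOn this
  exact ⟨t, ht⟩

lemma Phi_PhiInv {p : ℝ} (hp : p ∈ Set.Ioo (0:ℝ) 1) : Phi (PhiInv p) = p :=
  Function.invFun_eq (Phi_exists_eq hp)

lemma gaussianReal_sq_Iic {σ : ℝ} (hσ : 0 < σ) (τ : ℝ) :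
    gaussianReal 0 ⟨σ^2, sq_nonneg σ⟩ (Set.Iic τ) = ENNReal.ofReal (Phi (τ/σ)) := by
  have h := gaussianReal_map_const_mul (μ := 0) (v := 1) σ
  rw [mul_one, mul_zero] at h
  change _ = gaussianReal 0 ⟨σ ^ 2, sq_nonneg σ⟩ at h
  rw [← h, Measure.map_apply (measurable_const_mul σ) measurableSet_Iic]
  have hpre : (fun x : ℝ => σ * x) ⁻¹' Set.Iic τ = Set.Iic (τ/σ) := by
    ext x
    simp only [Set.mem_preimage, Set.mem_Iic]
    rw [le_div_iff₀ hσ, mul_comm]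
  rw [hpre, Phi_eq_ofReal]

lemma lintegral_pi_prod {n : ℕ} (μ : Fin n → Measure ℝ) [∀ i, SigmaFinite (μ i)]
    (f : Fin n → ℝ → ℝ≥0∞) (hf : ∀ i, Measurable (f i)) :
    ∫⁻ x : Fin n → ℝ, ∏ i, f i (x i) ∂(Measure.pi μ) = ∏ i, ∫⁻ t, f i t ∂(μ i) := by
  induction n with
  | zero => simp [Measure.pi_empty_univ]
  | succ n ih =>
    have mp := (measurePreserving_piFinSuccAbove μ 0).symm
    rw [← mp.lintegral_comp (by
      apply Finset.measurable_prod
      exact fun i _ => (hf i).comp (measurable_pi_apply i))]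
    simp_rw [MeasurableEquiv.piFinSuccAbove_symm_apply, Fin.insertNthEquiv,
      Fin.prod_univ_succ, Fin.insertNth_zero, Equiv.coe_fn_mk, cast_eq,
      Fin.zero_succAbove, Fin.cons_zero, Fin.cons_succ]
    have hmg : Measurable (fun xs : Fin n → ℝ => ∏ i : Fin n, f i.succ (xs i)) :=
      Finset.measurable_prod _ (fun i _ => (hf i.succ).comp (measurable_pi_apply i))
    rw [lintegral_prod_mul (f := fun a : ℝ => f 0 a)
      (g := fun xs : Fin n → ℝ => ∏ i : Fin n, f i.succ (xs i))
      (hf 0).aemeasurable hmg.aemeasurable]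
    rw [ih (fun i => μ i.succ) (fun i => f i.succ) (fun i => hf i.succ)]

lemma pi_withDensity {n : ℕ} (μ : Fin n → Measure ℝ) [∀ i, SigmaFinite (μ i)]
    (f : Fin n → ℝ → ℝ≥0∞) (hf : ∀ i, Measurable (f i))
    [∀ i, SigmaFinite ((μ i).withDensity (f i))] :
    Measure.pi (fun i => (μ i).withDensity (f i)) =
      (Measure.pi μ).withDensity (fun x => ∏ i, f i (x i)) := by
  refine Measure.pi_eq (fun s hs => ?_)
  rw [withDensity_apply _ (MeasurableSet.univ_pi hs)]
  have key : ∫⁻ x in Set.pi Set.univ s, ∏ i, f i (x i) ∂(Measure.pi μ)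
      = ∫⁻ x : Fin n → ℝ, ∏ i, (s i).indicator (f i) (x i) ∂(Measure.pi μ) := by
    rw [← lintegral_indicator (MeasurableSet.univ_pi hs)]
    congr 1
    funext x
    by_cases hx : x ∈ Set.pi Set.univ s
    · rw [Set.indicator_of_mem hx]
      exact Finset.prod_congr rfl (fun i _ =>
        (Set.indicator_of_mem (hx i trivial) _).symm)
    · rw [Set.indicator_of_notMem hx]
      have h2 : ∃ i, x i ∉ s i := by
        by_contra h
        push_neg at h
        exact hx (fun i _ => h i)
      obtain ⟨i, hi⟩ := h2
      exact (Finset.prod_eq_zero (Finset.mem_univ i)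
        (Set.indicator_of_notMem hi _)).symm
  rw [key, lintegral_pi_prod μ _ (fun i => (hf i).indicator (hs i))]
  exact Finset.prod_congr rfl (fun i _ => by
    rw [lintegral_indicator (hs i), withDensity_apply _ (hs i)])

noncomputable def isoGaussian (d : ℕ) (σ : ℝ) : Measure (EuclideanSpace ℝ (Fin d)) :=
  (Measure.pi fun _ : Fin d => gaussianReal 0 ⟨σ ^ 2, sq_nonneg σ⟩).map
    (MeasurableEquiv.toLp 2 (Fin d → ℝ))

section Shift

open scoped RealInnerProductSpace

variable {d : ℕ} {σ : ℝ}

lemma vσ_ne_zero (hσ : 0 < σ) : (⟨σ ^ 2, sq_nonneg σ⟩ : ℝ≥0) ≠ 0 := by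
  intro h
  have := congrArg NNReal.toReal h
  change σ ^ 2 = (0:ℝ) at this
  nlinarith

instance isoGaussian_prob (d : ℕ) (σ : ℝ) : IsProbabilityMeasure (isoGaussian d σ) := by
  rw [isoGaussian]
  exact Measure.isProbabilityMeasure_map (MeasurableEquiv.toLp 2 (Fin d → ℝ)).measurable.aemeasurable

/-- One-dimensional Gaussian shift density. -/
lemma gaussianReal_shift (hσ : 0 < σ) (c : ℝ) :
    gaussianReal c ⟨σ ^ 2, sq_nonneg σ⟩ =
      (gaussianReal 0 ⟨σ ^ 2, sq_nonneg σ⟩).withDensity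
        (fun t => ENNReal.ofReal (Real.exp ((c * t - c ^ 2 / 2) / σ ^ 2))) := by
  have hv := vσ_ne_zero hσ
  have hr : Measurable (fun t : ℝ => ENNReal.ofReal (Real.exp ((c * t - c ^ 2 / 2) / σ ^ 2))) := by
    apply Measurable.ennreal_ofReal
    exact (Real.measurable_exp.comp (((measurable_id.const_mul c).sub measurable_const).div_const _))
  rw [gaussianReal_of_var_ne_zero c hv, gaussianReal_of_var_ne_zero 0 hv,
    ← withDensity_mul _ (measurable_gaussianPDF 0 ⟨σ ^ 2, sq_nonneg σ⟩) hr]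
  congr 1
  funext t
  simp only [Pi.mul_apply, gaussianPDF_def c ⟨σ ^ 2, sq_nonneg σ⟩, gaussianPDF_def 0 ⟨σ ^ 2, sq_nonneg σ⟩]
  rw [← ENNReal.ofReal_mul (gaussianPDFReal_nonneg 0 ⟨σ ^ 2, sq_nonneg σ⟩ t)]
  congr 1
  rw [gaussianPDFReal_def c ⟨σ ^ 2, sq_nonneg σ⟩, gaussianPDFReal_def 0 ⟨σ ^ 2, sq_nonneg σ⟩]
  simp only [NNReal.toReal, sub_zero]
  rw [mul_assoc _ (Real.exp _) (Real.exp _), ← Real.exp_add]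
  congr 1
  have hσ2 : σ ^ 2 ≠ 0 := by positivity
  field_simp
  ring

/-- Shift of the product Gaussian measure. -/
lemma pi_gauss_shift (hσ : 0 < σ) (y : Fin d → ℝ) :
    (Measure.pi fun _ : Fin d => gaussianReal 0 ⟨σ ^ 2, sq_nonneg σ⟩).map (· + y) =
      Measure.pi (fun i => gaussianReal (y i) ⟨σ ^ 2, sq_nonneg σ⟩) := by
  refine (Measure.pi_eq (fun s hs => ?_)).symm
  rw [Measure.map_apply (measurable_add_const y) (MeasurableSet.univ_pi hs)]
  have hpre : (· + y) ⁻¹' (Set.pi Set.univ s) =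
      Set.pi Set.univ (fun i => (· + y i) ⁻¹' (s i)) := by
    ext x
    simp [Set.mem_pi, Pi.add_apply]
  rw [hpre, Measure.pi_pi]
  refine Finset.prod_congr rfl (fun i _ => ?_)
  rw [← Measure.map_apply (measurable_add_const (y i)) (hs i), gaussianReal_map_add_const (μ := 0) (v := ⟨σ ^ 2, sq_nonneg σ⟩) (y i),
    zero_add]

/-- Shift density on the product space. -/
lemma pi_gauss_shift_density (hσ : 0 < σ) (y : Fin d → ℝ) :
    (Measure.pi fun _ : Fin d => gaussianReal 0 ⟨σ ^ 2, sq_nonneg σ⟩).map (· + y) =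
      (Measure.pi fun _ : Fin d => gaussianReal 0 ⟨σ ^ 2, sq_nonneg σ⟩).withDensity
        (fun x => ENNReal.ofReal
          (Real.exp (((∑ i, y i * x i) - (∑ i, y i ^ 2) / 2) / σ ^ 2))) := by
  rw [pi_gauss_shift hσ y]
  have h1 : (fun i : Fin d => gaussianReal (y i) ⟨σ ^ 2, sq_nonneg σ⟩)
      = fun i => (gaussianReal 0 ⟨σ ^ 2, sq_nonneg σ⟩).withDensity
        (fun t => ENNReal.ofReal (Real.exp ((y i * t - y i ^ 2 / 2) / σ ^ 2))) := by
    funext i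
    exact gaussianReal_shift hσ (y i)
  have hmeas : ∀ i : Fin d, Measurable
      (fun t : ℝ => ENNReal.ofReal (Real.exp ((y i * t - y i ^ 2 / 2) / σ ^ 2))) := fun i =>
    (Real.measurable_exp.comp
      (((measurable_id.const_mul (y i)).sub measurable_const).div_const _)).ennreal_ofReal
  rw [h1]
  have h2 := pi_withDensity (fun _ : Fin d => gaussianReal 0 ⟨σ ^ 2, sq_nonneg σ⟩)
    (fun i t => ENNReal.ofReal (Real.exp ((y i * t - y i ^ 2 / 2) / σ ^ 2))) hmeas
  have h3 : ∀ i : Fin d, SigmaFinite ((gaussianReal 0 ⟨σ ^ 2, sq_nonneg σ⟩).withDensity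
      (fun t : ℝ => ENNReal.ofReal (Real.exp ((y i * t - y i ^ 2 / 2) / σ ^ 2)))) := by
    intro i
    rw [← gaussianReal_shift hσ (y i)]
    infer_instance
  rw [@pi_withDensity _ _ _ _ hmeas h3]
  congr 1
  funext x
  rw [← ENNReal.ofReal_prod_of_nonneg (fun i _ => (Real.exp_nonneg _))]
  rw [← Real.exp_sum]
  congr 1
  rw [← Finset.sum_div, Finset.sum_sub_distrib, ← Finset.sum_div]

lemma euclid_coord_eq (y : Fin d → ℝ) (i : Fin d) :
    ((MeasurableEquiv.toLp 2 (Fin d → ℝ)) y : EuclideanSpace ℝ (Fin d)) i = y i := rfl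

lemma euclid_symm_add (y : Fin d → ℝ) (δ : EuclideanSpace ℝ (Fin d)) :
    (MeasurableEquiv.toLp 2 (Fin d → ℝ)) y + δ =
      (MeasurableEquiv.toLp 2 (Fin d → ℝ))
        (y + ((MeasurableEquiv.toLp 2 (Fin d → ℝ)).symm) δ) := rfl

lemma inner_eq_sum (δ e : EuclideanSpace ℝ (Fin d)) : ⟪δ, e⟫ = ∑ i, δ i * e i := by
  rw [PiLp.inner_apply]
  simp [mul_comm]

lemma norm_sq_eq_sum (δ : EuclideanSpace ℝ (Fin d)) : ‖δ‖ ^ 2 = ∑ i, δ i ^ 2 := by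
  rw [← real_inner_self_eq_norm_sq, inner_eq_sum]
  exact Finset.sum_congr rfl (fun i _ => (sq (δ i)).symm)

lemma measurable_coord (i : Fin d) :
    Measurable (fun e : EuclideanSpace ℝ (Fin d) => e i) :=
  (measurable_pi_apply i).comp ((MeasurableEquiv.toLp 2 (Fin d → ℝ)).symm).measurable

/-- The shifted isotropic Gaussian has an explicit density w.r.t. the unshifted one. -/
lemma isoGaussian_shift (hσ : 0 < σ) (δ : EuclideanSpace ℝ (Fin d))
    {A : Set (EuclideanSpace ℝ (Fin d))} (hA : MeasurableSet A) :
    isoGaussian d σ {e | e + δ ∈ A} =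
      ∫⁻ e in A, ENNReal.ofReal (Real.exp ((⟪δ, e⟫ - ‖δ‖ ^ 2 / 2) / σ ^ 2))
        ∂(isoGaussian d σ) := by
  have hRE : ∀ e : EuclideanSpace ℝ (Fin d),
      ENNReal.ofReal (Real.exp ((⟪δ, e⟫ - ‖δ‖ ^ 2 / 2) / σ ^ 2))
        = ENNReal.ofReal (Real.exp (((∑ i, δ i * e i) - (∑ i, δ i ^ 2) / 2) / σ ^ 2)) := by
    intro e
    rw [inner_eq_sum, norm_sq_eq_sum]
  set φ := (MeasurableEquiv.toLp 2 (Fin d → ℝ)).symm with hφ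
  set ν := (Measure.pi fun _ : Fin d => gaussianReal 0 ⟨σ ^ 2, sq_nonneg σ⟩) with hν
  have hmeasRE : Measurable (fun e : EuclideanSpace ℝ (Fin d) =>
      ENNReal.ofReal (Real.exp ((⟪δ, e⟫ - ‖δ‖ ^ 2 / 2) / σ ^ 2))) := by
    simp only [hRE]
    apply Measurable.ennreal_ofReal
    apply Real.measurable_exp.comp
    apply Measurable.div_const
    apply Measurable.sub _ measurable_const
    exact Finset.measurable_sum _ (fun i _ => (measurable_coord i).const_mul (δ i))
  have hsetA : MeasurableSet {e : EuclideanSpace ℝ (Fin d) | e + δ ∈ A} :=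
    (measurable_add_const δ) hA
  rw [isoGaussian, ← MeasurableEquiv.symm_symm (MeasurableEquiv.toLp 2 (Fin d → ℝ)),
    Measure.map_apply φ.symm.measurable hsetA,
    setLIntegral_map hA hmeasRE φ.symm.measurable]
  have hpre : φ.symm ⁻¹' {e | e + δ ∈ A} = (· + φ δ) ⁻¹' (φ.symm ⁻¹' A) := by
    ext y
    simp only [Set.mem_preimage, Set.mem_setOf_eq]
    exact Iff.rfl
  rw [hpre, ← Measure.map_apply (measurable_add_const (φ δ)) (φ.symm.measurable hA)]
  rw [show (ν.map (· + φ δ)) = _ from pi_gauss_shift_density hσ (φ δ),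
    withDensity_apply _ (φ.symm.measurable hA)]
  refine setLIntegral_congr_fun (φ.symm.measurable hA)
    (fun y _ => ?_)
  beta_reduce
  rw [hRE]
  rfl

lemma map_withDensity_equiv {α β : Type*} [MeasurableSpace α] [MeasurableSpace β]
    (μ : Measure α) (e : α ≃ᵐ β) (g : β → ℝ≥0∞) (hg : Measurable g) :
    (μ.withDensity (fun a => g (e a))).map e = (μ.map e).withDensity g := by
  ext S hS
  rw [Measure.map_apply e.measurable hS, withDensity_apply _ (e.measurable hS),
    withDensity_apply _ hS, setLIntegral_map hS hg e.measurable]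

lemma isoGaussian_density (hσ : 0 < σ) :
    isoGaussian d σ = (volume : Measure (EuclideanSpace ℝ (Fin d))).withDensity
      (fun e => ENNReal.ofReal
        ((Real.sqrt (2 * Real.pi * σ ^ 2))⁻¹ ^ d * Real.exp (-‖e‖ ^ 2 / (2 * σ ^ 2)))) := by
  have hv := vσ_ne_zero hσ
  have h1 : (fun _ : Fin d => gaussianReal 0 ⟨σ ^ 2, sq_nonneg σ⟩)
      = fun _ : Fin d => (volume : Measure ℝ).withDensity (gaussianPDF 0 ⟨σ ^ 2, sq_nonneg σ⟩) := by
    funext i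
    exact gaussianReal_of_var_ne_zero 0 hv
  have h3 : ∀ _ : Fin d, SigmaFinite ((volume : Measure ℝ).withDensity
      (gaussianPDF 0 ⟨σ ^ 2, sq_nonneg σ⟩)) := by
    intro i
    rw [← gaussianReal_of_var_ne_zero 0 hv]
    infer_instance
  rw [isoGaussian, h1,
    @pi_withDensity _ _ _ _ (fun _ => measurable_gaussianPDF 0 ⟨σ ^ 2, sq_nonneg σ⟩) h3]
  have h4 : (Measure.pi fun _ : Fin d => (volume : Measure ℝ)) = volume := volume_pi.symm
  rw [h4]
  have hg : Measurable (fun e : EuclideanSpace ℝ (Fin d) => ENNReal.ofReal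
      ((Real.sqrt (2 * Real.pi * σ ^ 2))⁻¹ ^ d * Real.exp (-‖e‖ ^ 2 / (2 * σ ^ 2)))) := by
    apply Measurable.ennreal_ofReal
    apply Measurable.const_mul
    apply Real.measurable_exp.comp
    apply Measurable.div_const
    exact (measurable_norm.pow_const 2).neg
  have key : (fun x : Fin d → ℝ => ∏ i, gaussianPDF 0 ⟨σ ^ 2, sq_nonneg σ⟩ (x i))
      = fun x : Fin d → ℝ => ENNReal.ofReal
        ((Real.sqrt (2 * Real.pi * σ ^ 2))⁻¹ ^ d
          * Real.exp (-‖(MeasurableEquiv.toLp 2 (Fin d → ℝ)) x‖ ^ 2 / (2 * σ ^ 2))) := by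
    funext x
    simp only [gaussianPDF_def 0 ⟨σ ^ 2, sq_nonneg σ⟩]
    rw [← ENNReal.ofReal_prod_of_nonneg (fun i _ => gaussianPDFReal_nonneg 0 ⟨σ ^ 2, sq_nonneg σ⟩ _)]
    congr 1
    simp only [gaussianPDFReal_def 0 ⟨σ ^ 2, sq_nonneg σ⟩, NNReal.toReal, sub_zero]
    rw [Finset.prod_mul_distrib, Finset.prod_const, Finset.card_univ, Fintype.card_fin,
      ← Real.exp_sum]
    congr 1
    rw [norm_sq_eq_sum]
    have : ∀ i : Fin d, ((MeasurableEquiv.toLp 2 (Fin d → ℝ)) x : EuclideanSpace ℝ (Fin d)) i = x i :=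
      fun i => rfl
    simp only [this]
    rw [← Finset.sum_div, ← Finset.sum_neg_distrib]
  rw [key, map_withDensity_equiv _ (MeasurableEquiv.toLp 2 (Fin d → ℝ)) _ hg,
    MeasurableEquiv.coe_toLp, (PiLp.volume_preserving_toLp (Fin d)).map_eq]

lemma isoGaussian_map_isometry (hσ : 0 < σ)
    (T : EuclideanSpace ℝ (Fin d) ≃ₗᵢ[ℝ] EuclideanSpace ℝ (Fin d)) :
    (isoGaussian d σ).map T = isoGaussian d σ := by
  set Tm : EuclideanSpace ℝ (Fin d) ≃ᵐ EuclideanSpace ℝ (Fin d) :=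
    T.toHomeomorph.toMeasurableEquiv with hTm
  have hTmc : (Tm : EuclideanSpace ℝ (Fin d) → EuclideanSpace ℝ (Fin d)) = T := rfl
  have hg : Measurable (fun e : EuclideanSpace ℝ (Fin d) => ENNReal.ofReal
      ((Real.sqrt (2 * Real.pi * σ ^ 2))⁻¹ ^ d * Real.exp (-‖e‖ ^ 2 / (2 * σ ^ 2)))) := by
    apply Measurable.ennreal_ofReal
    apply Measurable.const_mul
    apply Real.measurable_exp.comp
    apply Measurable.div_const
    exact (measurable_norm.pow_const 2).neg
  rw [isoGaussian_density hσ, ← hTmc]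
  have hcomp : (fun e : EuclideanSpace ℝ (Fin d) => ENNReal.ofReal
        ((Real.sqrt (2 * Real.pi * σ ^ 2))⁻¹ ^ d * Real.exp (-‖e‖ ^ 2 / (2 * σ ^ 2))))
      = fun a => ENNReal.ofReal
        ((Real.sqrt (2 * Real.pi * σ ^ 2))⁻¹ ^ d * Real.exp (-‖Tm a‖ ^ 2 / (2 * σ ^ 2))) := by
    funext a
    rw [hTmc]
    rw [T.norm_map]
  have hvol : (volume : Measure (EuclideanSpace ℝ (Fin d))).map Tm = volume := by
    rw [hTmc]
    exact T.measurePreserving.map_eq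
  conv_lhs => rw [hcomp]
  rw [map_withDensity_equiv _ Tm _ hg, hvol]

lemma isoGaussian_halfspace (hσ : 0 < σ) {w : EuclideanSpace ℝ (Fin d)} (hw : ‖w‖ = 1)
    (τ : ℝ) : isoGaussian d σ {e | ⟪w, e⟫ ≤ τ} = ENNReal.ofReal (Phi (τ / σ)) := by
  have hd : 0 < d := by
    rcases Nat.eq_zero_or_pos d with h0 | h
    · exfalso
      subst h0
      haveI : Subsingleton (EuclideanSpace ℝ (Fin 0)) :=
        ⟨fun a b => PiLp.ext (fun i => i.elim0)⟩
      have : w = 0 := Subsingleton.elim _ _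
      rw [this, norm_zero] at hw
      exact one_ne_zero hw.symm
    · exact h
  set i₀ : Fin d := ⟨0, hd⟩
  have hcard : Module.finrank ℝ (EuclideanSpace ℝ (Fin d)) = Fintype.card (Fin d) := by
    rw [finrank_euclideanSpace_fin, Fintype.card_fin]
  have horth : Orthonormal ℝ (({i₀} : Set (Fin d)).restrict (fun _ : Fin d => w)) := by
    constructor
    · intro i
      exact hw
    · intro i j hij
      exact absurd (Subtype.ext ((i.2 : i.1 ∈ ({i₀} : Set (Fin d)))
        |>.trans (j.2 : j.1 ∈ ({i₀} : Set (Fin d))).symm)) hij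
  obtain ⟨b, hb⟩ := horth.exists_orthonormalBasis_extension_of_card_eq hcard
  have hbw : b i₀ = w := hb i₀ rfl
  have hinner : ∀ e, ⟪w, e⟫ = b.repr e i₀ := by
    intro e
    rw [← hbw, b.repr_apply_apply]
  have hS : MeasurableSet {y : EuclideanSpace ℝ (Fin d) | y i₀ ≤ τ} := by
    have : {y : EuclideanSpace ℝ (Fin d) | y i₀ ≤ τ}
        = (fun y : EuclideanSpace ℝ (Fin d) => y i₀) ⁻¹' (Set.Iic τ) := rfl
    rw [this]
    exact (measurable_coord i₀) measurableSet_Iic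
  set Tm : EuclideanSpace ℝ (Fin d) ≃ᵐ EuclideanSpace ℝ (Fin d) :=
    (b.repr : EuclideanSpace ℝ (Fin d) ≃ₗᵢ[ℝ]
      EuclideanSpace ℝ (Fin d)).toHomeomorph.toMeasurableEquiv with hTm
  have hTmc : (Tm : EuclideanSpace ℝ (Fin d) → EuclideanSpace ℝ (Fin d)) = ⇑b.repr := rfl
  have hset : {e : EuclideanSpace ℝ (Fin d) | ⟪w, e⟫ ≤ τ}
      = ⇑Tm ⁻¹' {y : EuclideanSpace ℝ (Fin d) | y i₀ ≤ τ} := by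
    ext e
    rw [hTmc]
    simp only [Set.mem_preimage, Set.mem_setOf_eq, hinner]
  rw [hset, ← Measure.map_apply Tm.measurable hS]
  have hmap : (isoGaussian d σ).map ⇑Tm = isoGaussian d σ := by
    rw [hTmc]
    exact isoGaussian_map_isometry hσ b.repr
  rw [hmap, isoGaussian,
    Measure.map_apply (MeasurableEquiv.toLp 2 (Fin d → ℝ)).measurable hS]
  have hpre : (MeasurableEquiv.toLp 2 (Fin d → ℝ)) ⁻¹' {y : EuclideanSpace ℝ (Fin d) | y i₀ ≤ τ}
      = Set.pi Set.univ (Function.update (fun _ : Fin d => (Set.univ : Set ℝ)) i₀ (Set.Iic τ)) := by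
    ext x
    simp only [Set.mem_preimage, Set.mem_setOf_eq, Set.mem_pi, Set.mem_univ, forall_true_left]
    constructor
    · intro hx i
      by_cases hi : i = i₀
      · subst hi
        rw [Function.update_self]
        exact hx
      · rw [Function.update_of_ne hi]
        trivial
    · intro hx
      have := hx i₀
      rwa [Function.update_self] at this
  rw [hpre, Measure.pi_pi]
  rw [Finset.prod_eq_single_of_mem i₀ (Finset.mem_univ i₀) (fun j _ hj => by
    rw [Function.update_of_ne hj]
    exact measure_univ)]
  rw [Function.update_self]
  exact gaussianReal_sq_Iic hσ τ

lemma measurable_R (σ : ℝ) (δ : EuclideanSpace ℝ (Fin d)) :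
    Measurable (fun e : EuclideanSpace ℝ (Fin d) =>
      ENNReal.ofReal (Real.exp ((⟪δ, e⟫ - ‖δ‖ ^ 2 / 2) / σ ^ 2))) := by
  apply Measurable.ennreal_ofReal
  apply Real.measurable_exp.comp
  apply Measurable.div_const
  apply Measurable.sub _ measurable_const
  have : (fun e : EuclideanSpace ℝ (Fin d) => ⟪δ, e⟫)
      = fun e => ∑ i, δ i * e i := by
    funext e
    exact inner_eq_sum δ e
  show Measurable (fun e : EuclideanSpace ℝ (Fin d) => ⟪δ, e⟫)
  rw [this]
  exact Finset.measurable_sum _ (fun i _ => (measurable_coord i).const_mul (δ i))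

/-- Neyman–Pearson lower bound for the shifted Gaussian measure of a set. -/
lemma np_lower (hσ : 0 < σ) (δ : EuclideanSpace ℝ (Fin d))
    {A : Set (EuclideanSpace ℝ (Fin d))} (hA : MeasurableSet A)
    {p : ℝ} (hp : p ∈ Set.Ioo (0:ℝ) 1) (hpA : ENNReal.ofReal p ≤ isoGaussian d σ A) :
    ENNReal.ofReal (Phi (PhiInv p - ‖δ‖ / σ)) ≤ isoGaussian d σ {e | e + δ ∈ A} := by
  rcases eq_or_ne δ 0 with h0 | h0
  · subst h0
    simp only [norm_zero, zero_div, sub_zero]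
    have h : {e : EuclideanSpace ℝ (Fin d) | e + 0 ∈ A} = A := by
      ext e
      simp
    rw [h, Phi_PhiInv hp]
    exact hpA
  set m := isoGaussian d σ with hm
  set t := ‖δ‖ with hts
  have ht : 0 < t := norm_pos_iff.2 h0
  set u : EuclideanSpace ℝ (Fin d) := t⁻¹ • δ with hu
  have hun : ‖u‖ = 1 := by
    rw [hu, norm_smul, norm_inv, norm_norm, ← hts, inv_mul_cancel₀ ht.ne']
  have hinner_u : ∀ e, ⟪δ, e⟫ = t * ⟪u, e⟫ := by
    intro e
    rw [hu, real_inner_smul_left]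
    field_simp
  have hud : ⟪u, δ⟫ = t := by
    rw [hu, real_inner_smul_left, real_inner_self_eq_norm_sq, ← hts]
    field_simp
  set τ := σ * PhiInv p with hτ
  set H : Set (EuclideanSpace ℝ (Fin d)) := {e | ⟪u, e⟫ ≤ τ} with hH
  have hHmeas : MeasurableSet H := by
    have : H = (fun e : EuclideanSpace ℝ (Fin d) => ⟪u, e⟫) ⁻¹' (Set.Iic τ) := rfl
    rw [this]
    have hcont : Continuous (fun e : EuclideanSpace ℝ (Fin d) => ⟪u, e⟫) :=
      continuous_const.inner continuous_id
    exact hcont.measurable measurableSet_Iic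
  have hμH : m H = ENNReal.ofReal p := by
    rw [hH, hm, isoGaussian_halfspace hσ hun τ]
    rw [show τ / σ = PhiInv p by rw [hτ, mul_comm, mul_div_assoc, div_self hσ.ne', mul_one]]
    rw [Phi_PhiInv hp]
  have hμδH : m {e | e + δ ∈ H} = ENNReal.ofReal (Phi (PhiInv p - t / σ)) := by
    have hset : {e : EuclideanSpace ℝ (Fin d) | e + δ ∈ H} = {e | ⟪u, e⟫ ≤ τ - t} := by
      ext e
      simp only [hH, Set.mem_setOf_eq, inner_add_right, hud]
      constructor <;> intro h <;> linarith
    rw [hset, hm, isoGaussian_halfspace hσ hun (τ - t)]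
    rw [show (τ - t) / σ = PhiInv p - t / σ by
      rw [hτ, sub_div, mul_comm, mul_div_assoc, div_self hσ.ne', mul_one]]
  -- density representation
  set R : EuclideanSpace ℝ (Fin d) → ℝ≥0∞ := fun e =>
    ENNReal.ofReal (Real.exp ((⟪δ, e⟫ - ‖δ‖ ^ 2 / 2) / σ ^ 2)) with hR
  set r₀ : ℝ≥0∞ := ENNReal.ofReal (Real.exp ((t * τ - ‖δ‖ ^ 2 / 2) / σ ^ 2)) with hr₀
  have hRup : ∀ e ∈ A \ H, r₀ ≤ R e := by
    rintro e ⟨-, heH⟩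
    rw [hR, hr₀]
    apply ENNReal.ofReal_le_ofReal
    apply Real.exp_le_exp.2
    apply div_le_div_of_nonneg_right _ (by positivity)
    have : τ ≤ ⟪u, e⟫ := le_of_not_ge heH
    have h2 : t * τ ≤ ⟪δ, e⟫ := by
      rw [hinner_u e]
      exact mul_le_mul_of_nonneg_left this ht.le
    linarith
  have hRdown : ∀ e ∈ H \ A, R e ≤ r₀ := by
    rintro e ⟨heH, -⟩
    rw [hR, hr₀]
    apply ENNReal.ofReal_le_ofReal
    apply Real.exp_le_exp.2
    apply div_le_div_of_nonneg_right _ (by positivity)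
    have : ⟪u, e⟫ ≤ τ := heH
    have h2 : ⟪δ, e⟫ ≤ t * τ := by
      rw [hinner_u e]
      exact mul_le_mul_of_nonneg_left this ht.le
    linarith
  have hdiff : m (H \ A) ≤ m (A \ H) := by
    have h1 : m (A ∩ H) + m (A \ H) = m A := measure_inter_add_diff A hHmeas
    have h2 : m (H ∩ A) + m (H \ A) = m H := measure_inter_add_diff H hA
    have h3 : m H ≤ m A := hμH ▸ hpA
    rw [Set.inter_comm] at h2
    have h4 : m (A ∩ H) + m (H \ A) ≤ m (A ∩ H) + m (A \ H) := by
      rw [h1, h2]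
      exact h3
    exact (ENNReal.add_le_add_iff_left (measure_ne_top m _)).1 h4
  have hshift : ∀ {S : Set (EuclideanSpace ℝ (Fin d))}, MeasurableSet S →
      m {e | e + δ ∈ S} = ∫⁻ e in S, R e ∂m := fun hS => isoGaussian_shift hσ δ hS
  rw [← hμδH, hshift hHmeas, hshift hA]
  rw [← lintegral_inter_add_diff R H hA, ← lintegral_inter_add_diff R A hHmeas]
  have hHA : ∫⁻ e in H \ A, R e ∂m ≤ ∫⁻ e in A \ H, R e ∂m := by
    calc ∫⁻ e in H \ A, R e ∂m ≤ ∫⁻ _ in H \ A, r₀ ∂m :=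
          setLIntegral_mono measurable_const (fun e he => hRdown e he)
      _ = r₀ * m (H \ A) := setLIntegral_const _ _
      _ ≤ r₀ * m (A \ H) := mul_le_mul_right hdiff _
      _ = ∫⁻ _ in A \ H, r₀ ∂m := (setLIntegral_const _ _).symm
      _ ≤ ∫⁻ e in A \ H, R e ∂m := setLIntegral_mono (measurable_R σ δ)
          (fun e he => hRup e he)
  have hint : ∫⁻ e in H ∩ A, R e ∂m = ∫⁻ e in A ∩ H, R e ∂m := by
    rw [Set.inter_comm]
  rw [hint]
  exact add_le_add le_rfl hHA

lemma Phi_pos (t : ℝ) : 0 < Phi t := by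
  refine ENNReal.toReal_pos (fun h0 => ?_) (measure_ne_top _ _)
  have := gaussianReal_absolutelyContinuous' 0 one_ne_zero h0
  rw [Real.volume_Iic] at this
  exact ENNReal.top_ne_zero this

lemma Phi_le_one (t : ℝ) : Phi t ≤ 1 := by
  have h := ENNReal.toReal_mono ENNReal.one_ne_top (prob_le_one (μ := gaussianReal 0 1)
    (s := Set.Iic t))
  simpa [Phi] using h

lemma PhiInv_one_sub {q : ℝ} (hq : q ∈ Set.Ioo (0:ℝ) 1) : PhiInv (1 - q) = - PhiInv q := by
  have h1q : (1 - q) ∈ Set.Ioo (0:ℝ) 1 := ⟨by linarith [hq.2], by linarith [hq.1]⟩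
  apply Phi_strictMono.injective
  rw [Phi_PhiInv h1q, Phi_neg, Phi_PhiInv hq]

/-- Neyman–Pearson upper bound for the shifted Gaussian measure of a set. -/
lemma np_upper (hσ : 0 < σ) (δ : EuclideanSpace ℝ (Fin d))
    {B : Set (EuclideanSpace ℝ (Fin d))} (hB : MeasurableSet B)
    {q : ℝ} (hq : q ∈ Set.Ioo (0:ℝ) 1) (hqB : isoGaussian d σ B ≤ ENNReal.ofReal q) :
    isoGaussian d σ {e | e + δ ∈ B} ≤ ENNReal.ofReal (Phi (PhiInv q + ‖δ‖ / σ)) := by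
  set m := isoGaussian d σ with hm
  have h1q : (1 - q) ∈ Set.Ioo (0:ℝ) 1 := ⟨by linarith [hq.2], by linarith [hq.1]⟩
  have hcompl : ENNReal.ofReal (1 - q) ≤ m Bᶜ := by
    rw [prob_compl_eq_one_sub hB, ENNReal.ofReal_sub 1 hq.1.le, ENNReal.ofReal_one]
    exact tsub_le_tsub_left hqB 1
  have lower := np_lower hσ δ hB.compl h1q hcompl
  have hsetc : {e : EuclideanSpace ℝ (Fin d) | e + δ ∈ Bᶜ}
      = {e : EuclideanSpace ℝ (Fin d) | e + δ ∈ B}ᶜ := rfl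
  rw [hsetc] at lower
  have hmeasS : MeasurableSet {e : EuclideanSpace ℝ (Fin d) | e + δ ∈ B} :=
    (measurable_add_const δ) hB
  -- pass to real numbers
  have hler : Phi (PhiInv (1 - q) - ‖δ‖ / σ)
      ≤ (m {e : EuclideanSpace ℝ (Fin d) | e + δ ∈ B}ᶜ).toReal :=
    (ENNReal.ofReal_le_iff_le_toReal (measure_ne_top _ _)).1 lower
  have hcomplr : (m {e : EuclideanSpace ℝ (Fin d) | e + δ ∈ B}ᶜ).toReal
      = 1 - (m {e : EuclideanSpace ℝ (Fin d) | e + δ ∈ B}).toReal := by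
    rw [prob_compl_eq_one_sub hmeasS,
      ENNReal.toReal_sub_of_le prob_le_one ENNReal.one_ne_top, ENNReal.toReal_one]
  have hphi : Phi (PhiInv (1 - q) - ‖δ‖ / σ) = 1 - Phi (PhiInv q + ‖δ‖ / σ) := by
    rw [PhiInv_one_sub hq, show -PhiInv q - ‖δ‖ / σ = -(PhiInv q + ‖δ‖ / σ) by ring, Phi_neg]
  rw [hphi, hcomplr] at hler
  have hfin : (m {e : EuclideanSpace ℝ (Fin d) | e + δ ∈ B}).toReal
      ≤ Phi (PhiInv q + ‖δ‖ / σ) := by linarith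
  calc m {e : EuclideanSpace ℝ (Fin d) | e + δ ∈ B}
      = ENNReal.ofReal ((m {e : EuclideanSpace ℝ (Fin d) | e + δ ∈ B}).toReal) :=
        (ENNReal.ofReal_toReal (measure_ne_top _ _)).symm
    _ ≤ ENNReal.ofReal (Phi (PhiInv q + ‖δ‖ / σ)) := ENNReal.ofReal_le_ofReal hfin

noncomputable def smoothProb {d : ℕ} {Y : Type*} (σ : ℝ)
    (F : EuclideanSpace ℝ (Fin d) → Y) (x : EuclideanSpace ℝ (Fin d)) (c : Y) : ℝ :=
  (isoGaussian d σ {e | F (x + e) = c}).toReal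

/-- Randomized smoothing certification (Cohen et al.). -/
theorem randomized_smoothing_certification
    {d : ℕ} {Y : Type*} [Fintype Y] [MeasurableSpace Y] [MeasurableSingletonClass Y] (σ : ℝ) (hσ : 0 < σ)
    (F : EuclideanSpace ℝ (Fin d) → Y) (hF : Measurable F)
    (G : EuclideanSpace ℝ (Fin d) → Y)
    (hG : ∀ y : EuclideanSpace ℝ (Fin d), ∀ c : Y, smoothProb σ F y c ≤ smoothProb σ F y (G y))
    (x : EuclideanSpace ℝ (Fin d)) (cA : Y) (pA pB : ℝ)
    (hpA : pA ∈ Set.Icc (0 : ℝ) 1) (hpB : pB ∈ Set.Icc (0 : ℝ) 1)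
    (h1 : pA ≤ smoothProb σ F x cA) (hAB : pB ≤ pA)
    (h2 : ∀ c : Y, c ≠ cA → smoothProb σ F x c ≤ pB)
    (δ : EuclideanSpace ℝ (Fin d))
    (hδ : ‖δ‖ < σ / 2 * (PhiInv pA - PhiInv pB)) :
    G (x + δ) = cA := by
  classical
  set m := isoGaussian d σ with hm
  set S : Y → Set (EuclideanSpace ℝ (Fin d)) := fun c => {e | F (x + e) = c} with hSdef
  have hS : ∀ c : Y, MeasurableSet (S c) := fun c =>
    (hF.comp (measurable_id.const_add x)) (measurableSet_singleton c)
  have hsp : ∀ c, smoothProb σ F x c = (m (S c)).toReal := fun c => rfl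
  have hset2 : ∀ c, {e : EuclideanSpace ℝ (Fin d) | F ((x + δ) + e) = c}
      = {e | e + δ ∈ S c} := by
    intro c
    ext e
    have hx : (x + δ) + e = x + (e + δ) := by
      rw [add_assoc, add_comm δ e]
    simp only [hSdef, Set.mem_setOf_eq, hx]
  have hsp2 : ∀ c, smoothProb σ F (x + δ) c = (m {e | e + δ ∈ S c}).toReal := by
    intro c
    have hd : smoothProb σ F (x + δ) c
        = (m {e : EuclideanSpace ℝ (Fin d) | F ((x + δ) + e) = c}).toReal := rfl
    rw [hd, hset2 c]
  have hBA : pB < pA := by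
    rcases lt_or_eq_of_le hAB with h | h
    · exact h
    · exfalso
      rw [h, sub_self, mul_zero] at hδ
      linarith [norm_nonneg δ]
  have key : ∀ c, c ≠ cA → smoothProb σ F (x + δ) c < smoothProb σ F (x + δ) cA := by
    intro c hc
    by_cases hpA1 : pA = 1
    · -- pA = 1 : the top class has full measure
      have hA1 : m (S cA) = 1 := by
        rw [← ENNReal.toReal_eq_one_iff]
        refine le_antisymm ?_ ?_
        · have h := ENNReal.toReal_mono ENNReal.one_ne_top (prob_le_one (μ := m) (s := S cA))
          simpa using h
        · calc (1:ℝ) = pA := hpA1.symm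
            _ ≤ smoothProb σ F x cA := h1
            _ = (m (S cA)).toReal := hsp cA
      have hcompl0 : m (S cA)ᶜ = 0 := by
        rw [prob_compl_eq_one_sub (hS cA), hA1, tsub_self]
      have hshiftc0 : m {e | e + δ ∈ (S cA)ᶜ} = 0 := by
        rw [hm, isoGaussian_shift hσ δ (hS cA).compl, setLIntegral_measure_zero _ _ hcompl0]
      have hsub : {e : EuclideanSpace ℝ (Fin d) | e + δ ∈ S c}
          ⊆ {e | e + δ ∈ (S cA)ᶜ} := by
        intro e he
        simp only [hSdef, Set.mem_setOf_eq, Set.mem_compl_iff] at he ⊢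
        rw [he]
        exact hc
      have hc0 : m {e | e + δ ∈ S c} = 0 :=
        le_antisymm (le_trans (measure_mono hsub) hshiftc0.le) (by positivity)
      have hcA1 : m {e | e + δ ∈ S cA} = 1 := by
        have hTc : {e : EuclideanSpace ℝ (Fin d) | e + δ ∈ S cA}ᶜ
            = {e | e + δ ∈ (S cA)ᶜ} := rfl
        have hT0 : m {e : EuclideanSpace ℝ (Fin d) | e + δ ∈ S cA}ᶜ = 0 := by
          rw [hTc]
          exact hshiftc0
        have hcp : m {e : EuclideanSpace ℝ (Fin d) | e + δ ∈ S cA}ᶜ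
            = 1 - m {e : EuclideanSpace ℝ (Fin d) | e + δ ∈ S cA} :=
          prob_compl_eq_one_sub ((measurable_add_const δ) (hS cA))
        rw [hT0] at hcp
        exact le_antisymm prob_le_one (tsub_eq_zero_iff_le.1 hcp.symm)
      rw [hsp2 c, hsp2 cA, hc0, hcA1]
      simp
    · have hpA1' : pA < 1 := lt_of_le_of_ne hpA.2 hpA1
      have hpA0 : 0 < pA := lt_of_le_of_lt hpB.1 hBA
      have hpAIoo : pA ∈ Set.Ioo (0:ℝ) 1 := ⟨hpA0, hpA1'⟩
      have hmA : ENNReal.ofReal pA ≤ m (S cA) := by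
        rw [ENNReal.ofReal_le_iff_le_toReal (measure_ne_top _ _)]
        rw [← hsp cA]
        exact h1
      have lower := np_lower hσ δ (hS cA) hpAIoo hmA
      have lowerr : Phi (PhiInv pA - ‖δ‖ / σ) ≤ smoothProb σ F (x + δ) cA := by
        rw [hsp2 cA]
        exact (ENNReal.ofReal_le_iff_le_toReal (measure_ne_top _ _)).1 lower
      by_cases hpB0 : pB = 0
      · have hmc0 : m (S c) = 0 := by
          have h2c := h2 c hc
          rw [hpB0] at h2c
          have hge : 0 ≤ smoothProb σ F x c := ENNReal.toReal_nonneg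
          have h0 : (m (S c)).toReal = 0 := by
            rw [← hsp c]
            linarith
          rcases (ENNReal.toReal_eq_zero_iff _).1 h0 with h | h
          · exact h
          · exact absurd h (measure_ne_top _ _)
        have hc0 : m {e | e + δ ∈ S c} = 0 := by
          rw [hm, isoGaussian_shift hσ δ (hS c), setLIntegral_measure_zero _ _ hmc0]
        have hpos : 0 < smoothProb σ F (x + δ) cA := lt_of_lt_of_le (Phi_pos _) lowerr
        rw [hsp2 c, hc0]
        simpa using hpos
      · have hpB0' : 0 < pB := lt_of_le_of_ne hpB.1 (Ne.symm hpB0)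
        have hpBIoo : pB ∈ Set.Ioo (0:ℝ) 1 := ⟨hpB0', lt_trans hBA hpA1'⟩
        have hmB : m (S c) ≤ ENNReal.ofReal pB := by
          rw [ENNReal.le_ofReal_iff_toReal_le (measure_ne_top _ _) hpB.1]
          rw [← hsp c]
          exact h2 c hc
        have upper := np_upper hσ δ (hS c) hpBIoo hmB
        have upperr : smoothProb σ F (x + δ) c ≤ Phi (PhiInv pB + ‖δ‖ / σ) := by
          rw [hsp2 c]
          have h := ENNReal.toReal_mono ENNReal.ofReal_ne_top upper
          rwa [ENNReal.toReal_ofReal (Phi_nonneg _)] at h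
        have hmid : Phi (PhiInv pB + ‖δ‖ / σ) < Phi (PhiInv pA - ‖δ‖ / σ) := by
          apply Phi_strictMono
          have hdiv : ‖δ‖ / σ < (PhiInv pA - PhiInv pB) / 2 := by
            rw [div_lt_div_iff₀ hσ two_pos]
            nlinarith [hδ]
          linarith
        linarith
  by_contra hne
  have hlt := key (G (x + δ)) hne
  have hle := hG (x + δ) cA
  linarith

end Shift
end

section
/- Let ε ~ N(0, σ²I) on ℝ^d and let S be measurable with N(x, σ²I)(S) = p ∈ (0,1). Among all measurable sets with this Gaussian measure at x, the half-space H = {z : ⟨z − x, δ/‖δ‖₂⟩ ≤ σΦ⁻¹(p)} minimizes N(x+δ, σ²I)(S) for any fixed δ ≠ 0; the minimum value is Φ(Φ⁻¹(p) − ‖δ‖₂/σ). -/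
open MeasureTheory ProbabilityTheory

/-- The Gaussian measure N(x, σ²I) on ℝ^d. -/
noncomputable def gaussAt {d : ℕ} (σ : ℝ) (x : EuclideanSpace ℝ (Fin d)) :
    Measure (EuclideanSpace ℝ (Fin d)) :=
  (isoGaussian d σ).map (fun e => x + e)

open Real
open scoped NNReal ENNReal RealInnerProductSpace

namespace NPaux

lemma sqrt_const (v₁ v₂ : ℝ≥0) (h₁ : v₁ ≠ 0) (h₂ : v₂ ≠ 0) :
    (√(2 * π * v₁))⁻¹ * (√(2 * π * v₂))⁻¹
      = (√(2 * π * ((v₁ : ℝ) + v₂)))⁻¹ * (√(2 * π * ((v₁ : ℝ) * v₂ / (v₁ + v₂))))⁻¹ := by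
  have hv₁ : (0:ℝ) < v₁ := by positivity
  have hv₂ : (0:ℝ) < v₂ := by positivity
  have hv : (0:ℝ) < (v₁:ℝ) + v₂ := by positivity
  rw [← mul_inv, ← mul_inv, ← Real.sqrt_mul (by positivity), ← Real.sqrt_mul (by positivity)]
  congr 2
  field_simp

lemma pdf_prod_key (v₁ v₂ : ℝ≥0) (h₁ : v₁ ≠ 0) (h₂ : v₂ ≠ 0) (t a : ℝ) :
    gaussianPDFReal 0 v₁ a * gaussianPDFReal 0 v₂ (t - a)
      = gaussianPDFReal 0 (v₁ + v₂) t *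
        gaussianPDFReal ((v₁ : ℝ) * t / (v₁ + v₂)) (v₁ * v₂ / (v₁ + v₂)) a := by
  have hv₁ : (0:ℝ) < v₁ := by positivity
  have hv₂ : (0:ℝ) < v₂ := by positivity
  have hv : (0:ℝ) < (v₁:ℝ) + v₂ := by positivity
  simp only [gaussianPDFReal, NNReal.coe_div, NNReal.coe_mul, NNReal.coe_add, sub_zero]
  rw [show ((√(2 * π * v₁))⁻¹ * rexp (-a ^ 2 / (2 * v₁))) * ((√(2 * π * v₂))⁻¹ * rexp (-(t - a) ^ 2 / (2 * v₂)))
      = ((√(2 * π * v₁))⁻¹ * (√(2 * π * v₂))⁻¹) * (rexp (-a ^ 2 / (2 * v₁)) * rexp (-(t - a) ^ 2 / (2 * v₂))) by ring,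
    show ((√(2 * π * ((v₁:ℝ) + v₂)))⁻¹ * rexp (-t ^ 2 / (2 * ((v₁:ℝ) + v₂)))) * ((√(2 * π * ((v₁:ℝ) * v₂ / (v₁ + v₂))))⁻¹ * rexp (-(a - (v₁:ℝ) * t / (v₁ + v₂)) ^ 2 / (2 * ((v₁:ℝ) * v₂ / (v₁ + v₂)))))
      = ((√(2 * π * ((v₁:ℝ) + v₂)))⁻¹ * (√(2 * π * ((v₁:ℝ) * v₂ / (v₁ + v₂))))⁻¹) * (rexp (-t ^ 2 / (2 * ((v₁:ℝ) + v₂))) * rexp (-(a - (v₁:ℝ) * t / (v₁ + v₂)) ^ 2 / (2 * ((v₁:ℝ) * v₂ / (v₁ + v₂))))) by ring,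
    sqrt_const v₁ v₂ h₁ h₂, ← Real.exp_add, ← Real.exp_add]
  congr 2
  field_simp
  ring


lemma lintegral_pdf_conv (v₁ v₂ : ℝ≥0) (h₁ : v₁ ≠ 0) (h₂ : v₂ ≠ 0) (t : ℝ) :
    ∫⁻ a, gaussianPDF 0 v₁ a * gaussianPDF 0 v₂ (t - a) = gaussianPDF 0 (v₁ + v₂) t := by
  have hw : (v₁ * v₂ / (v₁ + v₂) : ℝ≥0) ≠ 0 :=
    div_ne_zero (mul_ne_zero h₁ h₂) (add_pos (pos_iff_ne_zero.mpr h₁) (pos_iff_ne_zero.mpr h₂)).ne'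
  simp_rw [gaussianPDF, ← ENNReal.ofReal_mul (gaussianPDFReal_nonneg _ _ _),
    pdf_prod_key v₁ v₂ h₁ h₂ t, ENNReal.ofReal_mul (gaussianPDFReal_nonneg _ _ _)]
  rw [lintegral_const_mul _ (measurable_gaussianPDFReal _ _).ennreal_ofReal, lintegral_gaussianPDFReal_eq_one _ hw,
    mul_one]

lemma gauss_conv (v₁ v₂ : ℝ≥0) :
    ((gaussianReal 0 v₁).prod (gaussianReal 0 v₂)).map (fun p : ℝ × ℝ => p.1 + p.2)
      = gaussianReal 0 (v₁ + v₂) := by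
  by_cases h₁ : v₁ = 0
  · subst h₁
    rw [gaussianReal_zero_var, Measure.dirac_prod,
      Measure.map_map measurable_add measurable_prodMk_left, zero_add]
    have : ((fun p : ℝ × ℝ => p.1 + p.2) ∘ Prod.mk (0:ℝ)) = id := by
      funext b; simp
    rw [this, Measure.map_id]
  by_cases h₂ : v₂ = 0
  · subst h₂
    rw [gaussianReal_zero_var, Measure.prod_dirac,
      Measure.map_map measurable_add measurable_prodMk_right, add_zero]
    have : ((fun p : ℝ × ℝ => p.1 + p.2) ∘ (fun a : ℝ => (a, (0:ℝ)))) = id := by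
      funext b; simp
    rw [this, Measure.map_id]
  have hF : Measurable (fun p : ℝ × ℝ => gaussianPDF 0 v₂ (p.2 - p.1)) :=
    (measurable_gaussianPDF 0 v₂).comp (measurable_snd.sub measurable_fst)
  ext s hs
  rw [Measure.map_apply measurable_add hs, Measure.prod_apply (measurable_add hs)]
  have key : ∀ a : ℝ, (gaussianReal 0 v₂) (Prod.mk a ⁻¹' ((fun p : ℝ × ℝ => p.1 + p.2) ⁻¹' s))
      = ∫⁻ t in s, gaussianPDF 0 v₂ (t - a) := by
    intro a
    have h0 : (Prod.mk a ⁻¹' ((fun p : ℝ × ℝ => p.1 + p.2) ⁻¹' s)) = (fun b => a + b) ⁻¹' s := rfl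
    have h1 : ∀ t : ℝ, gaussianPDF a v₂ t = gaussianPDF 0 v₂ (t - a) := by
      intro t
      unfold gaussianPDF
      rw [gaussianPDFReal_sub, zero_add]
    rw [h0, ← Measure.map_apply (measurable_const_add a) hs, gaussianReal_map_const_add,
      zero_add, gaussianReal_apply _ h₂]
    exact setLIntegral_congr_fun hs (fun t _ => h1 t)
  simp_rw [key]
  rw [gaussianReal_of_var_ne_zero _ h₁,
    lintegral_withDensity_eq_lintegral_mul _ (measurable_gaussianPDF _ _)
      hF.lintegral_prod_right']
  simp only [Pi.mul_apply]
  have swap : ∀ a : ℝ, gaussianPDF 0 v₁ a * (∫⁻ t in s, gaussianPDF 0 v₂ (t - a))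
      = ∫⁻ t in s, gaussianPDF 0 v₁ a * gaussianPDF 0 v₂ (t - a) := fun a =>
    (lintegral_const_mul _ ((measurable_gaussianPDF 0 v₂).comp (measurable_id.sub_const a))).symm
  rw [lintegral_congr swap, lintegral_lintegral_swap]
  · rw [gaussianReal_apply _ (by simp [h₁] : v₁ + v₂ ≠ 0)]
    refine setLIntegral_congr_fun hs (fun t _ => ?_)
    exact lintegral_pdf_conv v₁ v₂ h₁ h₂ t
  · exact (((measurable_gaussianPDF 0 v₁).comp measurable_fst).mul
      ((measurable_gaussianPDF 0 v₂).comp (measurable_snd.sub measurable_fst))).aemeasurable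


lemma measurable_sum_mul {n : ℕ} (u : Fin n → ℝ) :
    Measurable (fun e : Fin n → ℝ => ∑ i, u i * e i) :=
  by fun_prop

lemma pi_map_sum : ∀ (n : ℕ) (v : ℝ≥0) (u : Fin n → ℝ),
    (Measure.pi fun _ : Fin n => gaussianReal 0 v).map (fun e => ∑ i, u i * e i)
      = gaussianReal 0 ((∑ i, (u i)^2).toNNReal * v) := by
  intro n
  induction n with
  | zero =>
    intro v u
    have h0 : (∑ i : Fin 0, (u i)^2).toNNReal * v = 0 := by
      apply NNReal.eq
      simp
    rw [h0, gaussianReal_zero_var]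
    have h1 : (fun e : Fin 0 → ℝ => ∑ i, u i * e i) = fun _ => (0:ℝ) := by
      funext e; simp
    rw [h1, Measure.map_const]
    simp
  | succ n ih =>
    intro v u
    set e := MeasurableEquiv.piFinSuccAbove (fun _ : Fin (n+1) => ℝ) 0 with he
    have hmp := (measurePreserving_piFinSuccAbove (fun _ : Fin (n+1) => gaussianReal 0 v) 0).symm
    rw [← hmp.map_eq, Measure.map_map (measurable_sum_mul u) e.symm.measurable]
    have hcomp : ((fun f : Fin (n+1) → ℝ => ∑ i, u i * f i) ∘ e.symm)
        = (fun q : ℝ × ℝ => q.1 + q.2) ∘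
          (Prod.map (fun a : ℝ => u 0 * a) (fun y : Fin n → ℝ => ∑ j, u j.succ * y j)) := by
      funext p
      have : e.symm p = Fin.cons p.1 p.2 := by
        simp [he, MeasurableEquiv.piFinSuccAbove, Fin.insertNth_zero]
        rfl
      simp [this, Fin.sum_univ_succ]
    rw [hcomp, ← Measure.map_map measurable_add
      ((measurable_const_mul _).prodMap (measurable_sum_mul _))]
    have hprodmap : ((gaussianReal 0 v).prod
          (Measure.pi fun _ : Fin n => gaussianReal 0 v)).map
          (Prod.map (fun a : ℝ => u 0 * a) (fun y : Fin n → ℝ => ∑ j, u j.succ * y j))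
        = ((gaussianReal 0 v).map (fun a => u 0 * a)).prod
          ((Measure.pi fun _ : Fin n => gaussianReal 0 v).map (fun y => ∑ j, u j.succ * y j)) := by
      rw [Measure.map_prod_map _ _ (measurable_const_mul _) (measurable_sum_mul _)]
    rw [hprodmap, gaussianReal_map_const_mul, ih v (fun j => u j.succ), mul_zero, gauss_conv]
    congr 1
    apply NNReal.eq
    have c1 : ((∑ i : Fin (n+1), (u i)^2).toNNReal : ℝ) = ∑ i, (u i)^2 :=
      Real.coe_toNNReal _ (by positivity)
    have c2 : ((∑ j : Fin n, (u (Fin.succ j))^2).toNNReal : ℝ) = ∑ j : Fin n, (u (Fin.succ j))^2 :=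
      Real.coe_toNNReal _ (by positivity)
    push_cast [c1, c2]
    rw [Fin.sum_univ_succ]
    ring


lemma withDensity_map_equiv {α β : Type*} [MeasurableSpace α] [MeasurableSpace β]
    (e : α ≃ᵐ β) (μ : Measure α) (g : α → ℝ≥0∞) (hg : Measurable g) :
    (μ.withDensity g).map e = (μ.map e).withDensity (g ∘ e.symm) := by
  ext s hs
  rw [Measure.map_apply e.measurable hs, withDensity_apply _ (e.measurable hs),
    withDensity_apply _ hs, setLIntegral_map hs (hg.comp e.symm.measurable) e.measurable]
  simp

lemma prod_withDensity {α β : Type*} [MeasurableSpace α] [MeasurableSpace β]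
    (μ : Measure α) (ν : Measure β) [SigmaFinite μ] [SigmaFinite ν]
    (f : α → ℝ≥0∞) (g : β → ℝ≥0∞) (hf : Measurable f) (hg : Measurable g)
    [SigmaFinite (μ.withDensity f)] [SigmaFinite (ν.withDensity g)] :
    (μ.withDensity f).prod (ν.withDensity g)
      = (μ.prod ν).withDensity (fun p => f p.1 * g p.2) := by
  refine Measure.prod_eq (μ := μ.withDensity f) (ν := ν.withDensity g) fun s t hs ht => ?_
  rw [withDensity_apply _ (hs.prod ht), ← Measure.prod_restrict,
    lintegral_prod_mul hf.aemeasurable hg.aemeasurable,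
    withDensity_apply _ hs, withDensity_apply _ ht]


lemma measurable_shift_density (m : ℝ) (v : ℝ≥0) :
    Measurable (fun y : ℝ => ENNReal.ofReal (rexp ((y * m - m^2/2) / v))) :=
  (Real.measurable_exp.comp (((measurable_id.mul_const m).sub_const (m^2/2)).div_const v)).ennreal_ofReal

lemma gauss_shift_density (m : ℝ) {v : ℝ≥0} (hv : v ≠ 0) :
    gaussianReal m v = (gaussianReal 0 v).withDensity
      (fun y => ENNReal.ofReal (rexp ((y * m - m^2/2) / v))) := by
  have hvpos : (0:ℝ) < v := by positivity
  rw [gaussianReal_of_var_ne_zero _ hv, gaussianReal_of_var_ne_zero _ hv,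
    ← withDensity_mul _ (measurable_gaussianPDF _ _) (measurable_shift_density m v)]
  congr 1
  funext y
  show gaussianPDF m v y = gaussianPDF 0 v y * ENNReal.ofReal (rexp ((y * m - m^2/2) / v))
  unfold gaussianPDF
  rw [← ENNReal.ofReal_mul (gaussianPDFReal_nonneg _ _ _)]
  congr 1
  unfold gaussianPDFReal
  rw [mul_assoc ((√(2 * π * (v:ℝ)))⁻¹), ← Real.exp_add]
  congr 2
  field_simp
  ring

lemma measurable_sum_density {n : ℕ} (δ : Fin n → ℝ) (v : ℝ≥0) :
    Measurable (fun y : Fin n → ℝ =>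
      ENNReal.ofReal (rexp ((∑ i, (y i * δ i - δ i^2/2)) / v))) := by
  apply Measurable.ennreal_ofReal
  apply Real.measurable_exp.comp
  apply Measurable.div_const
  fun_prop

lemma pi_shift : ∀ (n : ℕ) (v : ℝ≥0), v ≠ 0 → ∀ (δ : Fin n → ℝ),
    Measure.pi (fun i => gaussianReal (δ i) v)
      = (Measure.pi fun _ : Fin n => gaussianReal 0 v).withDensity
          (fun e => ENNReal.ofReal (rexp ((∑ i, (e i * δ i - δ i^2/2)) / v))) := by
  intro n
  induction n with
  | zero =>
    intro v hv δ
    have h1 : (fun e : Fin 0 → ℝ =>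
        ENNReal.ofReal (rexp ((∑ i, (e i * δ i - δ i^2/2)) / v))) = 1 := by
      funext y
      simp
    rw [h1, withDensity_one]
    congr 1
    funext i
    exact i.elim0
  | succ n ih =>
    intro v hv δ
    set e := MeasurableEquiv.piFinSuccAbove (fun _ : Fin (n+1) => ℝ) 0 with he
    set g₀ : ℝ → ℝ≥0∞ :=
      fun y => ENNReal.ofReal (rexp ((y * δ 0 - (δ 0)^2/2) / v)) with hg0def
    set G : (Fin n → ℝ) → ℝ≥0∞ :=
      fun y => ENNReal.ofReal (rexp ((∑ j, (y j * δ ((0:Fin (n+1)).succAbove j)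
        - δ ((0:Fin (n+1)).succAbove j)^2/2)) / v)) with hGdef
    have hL := ((measurePreserving_piFinSuccAbove
      (fun i : Fin (n+1) => gaussianReal (δ i) v) 0).symm e).map_eq
    have hR := ((measurePreserving_piFinSuccAbove
      (fun _ : Fin (n+1) => gaussianReal 0 v) 0).symm e).map_eq
    haveI i1 : SigmaFinite ((gaussianReal 0 v).withDensity g₀) := by
      rw [hg0def, ← gauss_shift_density (δ 0) hv]; infer_instance
    haveI i2 : SigmaFinite
        ((Measure.pi fun _ : Fin n => gaussianReal 0 v).withDensity G) := by
      rw [hGdef, ← ih v hv (fun j => δ ((0:Fin (n+1)).succAbove j))]; infer_instance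
    have hPW : ((gaussianReal 0 v).withDensity g₀).prod
          ((Measure.pi fun _ : Fin n => gaussianReal 0 v).withDensity G)
        = ((gaussianReal 0 v).prod (Measure.pi fun _ : Fin n => gaussianReal 0 v)).withDensity
            (fun p => g₀ p.1 * G p.2) :=
      prod_withDensity _ _ _ _ (measurable_shift_density _ _) (measurable_sum_density _ _)
    rw [← hL, gauss_shift_density (δ 0) hv,
      ih v hv (fun j => δ ((0:Fin (n+1)).succAbove j)), ← hg0def]
    rw [show ((fun y : Fin n → ℝ => ENNReal.ofReal
        (rexp ((∑ j, (y j * δ ((0:Fin (n+1)).succAbove j)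
          - δ ((0:Fin (n+1)).succAbove j)^2/2)) / v)))) = G from rfl]
    have hmeas : Measurable (fun p : ℝ × (Fin n → ℝ) => g₀ p.1 * G p.2) :=
      ((measurable_shift_density (δ 0) v).comp measurable_fst).mul
        ((measurable_sum_density (fun j => δ ((0:Fin (n+1)).succAbove j)) v).comp measurable_snd)
    rw [hPW, withDensity_map_equiv e.symm _ (fun p => g₀ p.1 * G p.2) hmeas, hR]
    congr 1
    funext f
    show g₀ ((e.symm.symm f).1) * G ((e.symm.symm f).2) = _
    have h1 : (e.symm.symm f).1 = f 0 := rfl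
    have h2 : (e.symm.symm f).2 = fun j => f ((0:Fin (n+1)).succAbove j) := rfl
    rw [h1, h2, hg0def, hGdef]
    simp only
    rw [← ENNReal.ofReal_mul (Real.exp_nonneg _), ← Real.exp_add, ← add_div]
    congr 2
    rw [Fin.sum_univ_succ]
    simp [Fin.zero_succAbove]


/-! ### Phi facts -/

lemma Phi_eq_toReal (t : ℝ) : Phi t = ((gaussianReal 0 1) (Set.Iic t)).toReal := rfl

lemma Phi_nonneg (t : ℝ) : 0 ≤ Phi t := ENNReal.toReal_nonneg

lemma Phi_le_one (t : ℝ) : Phi t ≤ 1 := by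
  simp only [Phi_eq_toReal]
  have := ENNReal.toReal_mono (measure_ne_top (gaussianReal 0 1) _)
    (measure_mono (Set.subset_univ (Set.Iic t)))
  simpa using this

lemma pdf_le_one (x : ℝ) : gaussianPDFReal 0 1 x ≤ 1 := by
  unfold gaussianPDFReal
  have h1 : rexp (-(x - 0)^2 / (2 * ((1:ℝ≥0):ℝ))) ≤ 1 := by
    rw [Real.exp_le_one_iff]
    have : (0:ℝ) ≤ (x - 0)^2 := sq_nonneg _
    have : (0:ℝ) < 2 * ((1:ℝ≥0):ℝ) := by norm_num
    apply div_nonpos_of_nonpos_of_nonneg <;> [simp [sq_nonneg]; positivity]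
  have h2 : (√(2 * π * ((1:ℝ≥0):ℝ)))⁻¹ ≤ 1 := by
    rw [inv_le_one_iff₀]
    right
    rw [show (1:ℝ) = √1 by simp]
    apply Real.sqrt_le_sqrt
    simp only [NNReal.coe_one, mul_one]
    nlinarith [Real.pi_gt_three]
  calc (√(2 * π * ((1:ℝ≥0):ℝ)))⁻¹ * rexp (-(x - 0)^2 / (2 * ((1:ℝ≥0):ℝ)))
      ≤ 1 * 1 := by
        apply mul_le_mul h2 h1 (Real.exp_nonneg _) zero_le_one
    _ = 1 := by norm_num
  
lemma gauss_Ioc_toReal (a b : ℝ) (hab : a ≤ b) :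
    ((gaussianReal 0 1) (Set.Ioc a b)).toReal = ∫ x in Set.Ioc a b, gaussianPDFReal 0 1 x := by
  rw [gaussianReal_apply_eq_integral 0 one_ne_zero, ENNReal.toReal_ofReal]
  exact setIntegral_nonneg measurableSet_Ioc fun x _ => gaussianPDFReal_nonneg _ _ _

lemma Phi_add (a b : ℝ) (hab : a ≤ b) :
    Phi b = Phi a + ((gaussianReal 0 1) (Set.Ioc a b)).toReal := by
  simp only [Phi_eq_toReal]
  rw [← ENNReal.toReal_add (measure_ne_top _ _) (measure_ne_top _ _),
    ← measure_union (Set.Iic_disjoint_Ioc le_rfl) measurableSet_Ioc,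
    Set.Iic_union_Ioc_eq_Iic hab]

lemma Phi_mono : Monotone Phi := by
  intro a b hab
  rw [Phi_add a b hab]
  have := ENNReal.toReal_nonneg (a := (gaussianReal 0 1) (Set.Ioc a b))
  linarith

lemma Phi_lipschitz (a b : ℝ) (hab : a ≤ b) : Phi b - Phi a ≤ b - a := by
  rw [Phi_add a b hab]
  have h1 : ((gaussianReal 0 1) (Set.Ioc a b)).toReal ≤ b - a := by
    rw [gauss_Ioc_toReal a b hab]
    calc ∫ x in Set.Ioc a b, gaussianPDFReal 0 1 x
        ≤ ∫ _x in Set.Ioc a b, (1:ℝ) := by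
          apply setIntegral_mono_on (integrable_gaussianPDFReal 0 1).integrableOn
            (integrableOn_const (by rw [Real.volume_Ioc]; exact ENNReal.ofReal_ne_top))
            measurableSet_Ioc
          exact fun x _ => pdf_le_one x
      _ = b - a := by
          simp [Real.volume_Ioc, ENNReal.toReal_ofReal (sub_nonneg.mpr hab), hab]
  linarith

lemma Phi_continuous : Continuous Phi := by
  have : LipschitzWith 1 Phi := by
    apply LipschitzWith.of_dist_le_mul
    intro a b
    rw [Real.dist_eq, Real.dist_eq, NNReal.coe_one, one_mul]
    rcases le_total a b with h | h
    · rw [abs_sub_comm, abs_of_nonneg (sub_nonneg.mpr (Phi_mono h)),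
        abs_sub_comm a b, abs_of_nonneg (sub_nonneg.mpr h)]
      exact Phi_lipschitz a b h
    · rw [abs_of_nonneg (sub_nonneg.mpr (Phi_mono h)), abs_of_nonneg (sub_nonneg.mpr h)]
      exact Phi_lipschitz b a h
  exact this.continuous

lemma Phi_tendsto_atTop : Filter.Tendsto Phi Filter.atTop (nhds 1) := by
  have h := tendsto_measure_Iic_atTop (gaussianReal 0 1)
  rw [measure_univ] at h
  have := (ENNReal.tendsto_toReal ENNReal.one_ne_top).comp h
  exact this

lemma Phi_tendsto_atBot : Filter.Tendsto Phi Filter.atBot (nhds 0) := by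
  apply squeeze_zero Phi_nonneg (g := fun x => 1 - ((gaussianReal 0 1) (Set.Ici (x + 1))).toReal)
  · intro t
    have hd : Disjoint (Set.Iic t) (Set.Ici (t + 1)) := by
      rw [Set.Iic_disjoint_Ici]
      exact not_le.mpr (lt_add_one t)
    have hsum : Phi t + ((gaussianReal 0 1) (Set.Ici (t + 1))).toReal ≤ 1 := by
      simp only [Phi_eq_toReal]
      rw [← ENNReal.toReal_add (measure_ne_top _ _) (measure_ne_top _ _),
        ← measure_union hd measurableSet_Ici]
      have := ENNReal.toReal_mono (measure_ne_top (gaussianReal 0 1) _)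
        (measure_mono (Set.subset_univ (Set.Iic t ∪ Set.Ici (t + 1))))
      simpa using this
    linarith
  · have h := tendsto_measure_Ici_atBot (gaussianReal 0 1)
    rw [measure_univ] at h
    have h2 := (ENNReal.tendsto_toReal ENNReal.one_ne_top).comp h
    have h3 : Filter.Tendsto (fun x : ℝ => x + 1) Filter.atBot Filter.atBot :=
      Filter.tendsto_atBot_add_const_right _ _ Filter.tendsto_id
    have h4 := h2.comp h3
    have := (tendsto_const_nhds (x := (1:ℝ)) (f := Filter.atBot)).sub h4
    simpa using this

lemma Phi_surjOn (p : ℝ) (hp : p ∈ Set.Ioo (0:ℝ) 1) : ∃ t, Phi t = p := by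
  obtain ⟨a, ha⟩ := (Phi_tendsto_atBot.eventually_lt_const hp.1).exists
  obtain ⟨b, hb⟩ := (Phi_tendsto_atTop.eventually_const_lt hp.2).exists
  have hab : a ≤ b := by
    by_contra h
    push_neg at h
    have := Phi_mono h.le
    linarith
  have := intermediate_value_Icc hab Phi_continuous.continuousOn
  obtain ⟨t, _, ht⟩ := this ⟨ha.le, hb.le⟩
  exact ⟨t, ht⟩


/-! ### Euclidean layer -/

lemma measurable_innerR {d : ℕ} (w : EuclideanSpace ℝ (Fin d)) :
    Measurable (fun e : EuclideanSpace ℝ (Fin d)  => ⟪e, w⟫) := by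
  have : Continuous (fun e : EuclideanSpace ℝ (Fin d) => ⟪e, w⟫) :=
    continuous_id.inner continuous_const
  exact this.measurable

lemma sum_sq_eq_norm {d : ℕ} (w : EuclideanSpace ℝ (Fin d)) : ∑ i, (w i)^2 = ‖w‖^2 := by
  rw [EuclideanSpace.norm_eq, Real.sq_sqrt (by positivity)]
  simp [sq_abs]

instance isoGaussian_prob (d : ℕ) (σ : ℝ) : IsProbabilityMeasure (isoGaussian d σ) := by
  unfold isoGaussian
  haveI : ∀ i : Fin d, IsProbabilityMeasure ((fun _ : Fin d => gaussianReal 0 (⟨σ ^ 2, sq_nonneg σ⟩ : ℝ≥0)) i) := fun _ => instIsProbabilityMeasureGaussianReal _ _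
  exact Measure.isProbabilityMeasure_map (MeasurableEquiv.measurable _).aemeasurable

instance gaussAt_prob {d : ℕ} (σ : ℝ) (x : EuclideanSpace ℝ (Fin d)) :
    IsProbabilityMeasure (gaussAt σ x) := by
  unfold gaussAt
  exact Measure.isProbabilityMeasure_map (measurable_const_add x).aemeasurable

lemma isoGaussian_map_inner (d : ℕ) (σ : ℝ) (w : EuclideanSpace ℝ (Fin d)) :
    (isoGaussian d σ).map (fun e => ⟪e, w⟫)
      = gaussianReal 0 ((∑ i, (w i)^2).toNNReal * ⟨σ^2, sq_nonneg σ⟩) := by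
  unfold isoGaussian
  rw [Measure.map_map (measurable_innerR w) (MeasurableEquiv.measurable _)]
  have hcomp : ((fun e : EuclideanSpace ℝ (Fin d) => ⟪e, w⟫)
        ∘ (MeasurableEquiv.toLp 2 (Fin d → ℝ)))
      = fun y : Fin d → ℝ => ∑ i, w i * y i := by
    funext y
    show ⟪(MeasurableEquiv.toLp 2 (Fin d → ℝ)) y, w⟫ = _
    rw [PiLp.inner_apply]
    exact Finset.sum_congr rfl fun i _ => rfl
  rw [hcomp]; exact pi_map_sum d _ (fun i => w i)

lemma pi_map_add {n : ℕ} {v : ℝ≥0} (c : Fin n → ℝ) :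
    (Measure.pi fun _ : Fin n => gaussianReal 0 v).map (fun y i => c i + y i)
      = Measure.pi (fun i => gaussianReal (c i) v) := by
  have hm : Measurable (fun y : Fin n → ℝ => fun i => c i + y i) :=
    by fun_prop
  refine (Measure.pi_eq fun s hs => ?_).symm
  rw [Measure.map_apply hm (MeasurableSet.univ_pi hs)]
  have hpre : (fun y : Fin n → ℝ => fun i => c i + y i) ⁻¹' (Set.univ.pi s)
      = Set.univ.pi (fun i => (fun t => c i + t) ⁻¹' s i) := by
    ext y; simp [Set.mem_pi]
  rw [hpre, Measure.pi_pi]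
  refine Finset.prod_congr rfl fun i _ => ?_
  rw [← Measure.map_apply (measurable_const_add (c i)) (hs i), gaussianReal_map_const_add,
    zero_add]

lemma isoGaussian_shift (d : ℕ) {σ : ℝ} (hσ : 0 < σ) (δ : EuclideanSpace ℝ (Fin d)) :
    (isoGaussian d σ).map (fun e => δ + e)
      = (isoGaussian d σ).withDensity
          (fun e => ENNReal.ofReal (rexp ((⟪e, δ⟫ - ‖δ‖^2/2) / σ^2))) := by
  have hv : (⟨σ^2, sq_nonneg σ⟩ : ℝ≥0) ≠ 0 := by
    intro h
    have h' : σ^2 = 0 := congrArg NNReal.toReal h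
    exact (pow_pos hσ 2).ne' h'
  set φ := (MeasurableEquiv.toLp 2 (Fin d → ℝ)).symm with hφ
  unfold isoGaussian
  rw [show (MeasurableEquiv.toLp 2 (Fin d → ℝ)) = φ.symm from rfl]
  rw [Measure.map_map (measurable_const_add δ) (MeasurableEquiv.measurable _)]
  have hcomp : ((fun e : EuclideanSpace ℝ (Fin d) => δ + e) ∘ ⇑φ.symm)
      = ⇑φ.symm ∘ (fun y : Fin d → ℝ => fun i => (φ δ) i + y i) := rfl
  rw [hcomp, ← Measure.map_map φ.symm.measurable
    (measurable_pi_lambda _ fun i => (measurable_pi_apply i).const_add ((φ δ) i))]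
  erw [pi_map_add (fun i => (φ δ) i), pi_shift _ _ hv (fun i => (φ δ) i),
    withDensity_map_equiv φ.symm _ _ (measurable_sum_density (fun i => (φ δ) i) _)]
  congr 1
  funext e
  show ENNReal.ofReal (rexp ((∑ i, ((φ.symm.symm e) i * (φ δ) i - (φ δ) i^2/2))
      / ((⟨σ^2, sq_nonneg σ⟩ : ℝ≥0) : ℝ))) = _
  have h1 : ((⟨σ^2, sq_nonneg σ⟩ : ℝ≥0) : ℝ) = σ^2 := rfl
  have h2 : ∀ i, (φ.symm.symm e) i = e i := fun i => rfl
  have h3 : ∀ i, (φ δ) i = δ i := fun i => rfl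
  simp only [h1, h2, h3]
  congr 2
  rw [Finset.sum_sub_distrib, PiLp.inner_apply, ← Finset.sum_div, sum_sq_eq_norm]
  have h4 : ∑ i, (inner ℝ (e i) (δ i) : ℝ) = ∑ i, e i * δ i :=
    Finset.sum_congr rfl fun i _ => mul_comm _ _
  rw [h4]


lemma measurable_r {d : ℕ} (x δ : EuclideanSpace ℝ (Fin d)) (σ : ℝ) :
    Measurable (fun z : EuclideanSpace ℝ (Fin d) =>
      ENNReal.ofReal (rexp ((⟪z - x, δ⟫ - ‖δ‖^2/2) / σ^2))) := by
  apply Measurable.ennreal_ofReal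
  apply Real.measurable_exp.comp
  apply Measurable.div_const
  apply Measurable.sub_const
  exact (measurable_innerR δ).comp (measurable_id.sub_const x)

lemma gaussAt_density {d : ℕ} {σ : ℝ} (hσ : 0 < σ) (x δ : EuclideanSpace ℝ (Fin d)) :
    gaussAt σ (x + δ) = (gaussAt σ x).withDensity
      (fun z => ENNReal.ofReal (rexp ((⟪z - x, δ⟫ - ‖δ‖^2/2) / σ^2))) := by
  unfold gaussAt
  have h1 : (fun e : EuclideanSpace ℝ (Fin d) => x + δ + e)
      = (fun e => x + e) ∘ (fun e => δ + e) := by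
    funext e
    simp [add_assoc]
  rw [h1, ← Measure.map_map (measurable_const_add x) (measurable_const_add δ),
    isoGaussian_shift d hσ δ]
  have h2 : (fun e : EuclideanSpace ℝ (Fin d) => x + e)
      = ⇑(MeasurableEquiv.addLeft x) := rfl
  have hg : Measurable (fun e : EuclideanSpace ℝ (Fin d) =>
      ENNReal.ofReal (rexp ((⟪e, δ⟫ - ‖δ‖^2/2) / σ^2))) :=
    (Real.measurable_exp.comp
      (((measurable_innerR δ).sub_const _).div_const _)).ennreal_ofReal
  rw [h2, withDensity_map_equiv (MeasurableEquiv.addLeft x) _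
    (fun e => ENNReal.ofReal (rexp ((⟪e, δ⟫ - ‖δ‖^2/2) / σ^2))) hg]
  · congr 1
    funext z
    show ENNReal.ofReal (rexp ((⟪(MeasurableEquiv.addLeft x).symm z, δ⟫ - ‖δ‖^2/2) / σ^2)) = _
    have : (MeasurableEquiv.addLeft x).symm z = z - x := by
      show -x + z = z - x
      rw [neg_add_eq_sub]
    rw [this]

lemma halfspace_measurable {d : ℕ} (x w : EuclideanSpace ℝ (Fin d)) (c : ℝ) :
    MeasurableSet {z : EuclideanSpace ℝ (Fin d) | ⟪z - x, w⟫ ≤ c} :=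
  ((measurable_innerR w).comp (measurable_id.sub_const x)) measurableSet_Iic

lemma gaussAt_halfspace {d : ℕ} (σ : ℝ) (x y w : EuclideanSpace ℝ (Fin d)) (c : ℝ) :
    gaussAt σ y {z : EuclideanSpace ℝ (Fin d) | ⟪z - x, w⟫ ≤ c}
      = gaussianReal 0 ((∑ i, (w i)^2).toNNReal * ⟨σ^2, sq_nonneg σ⟩)
          (Set.Iic (c - ⟪y - x, w⟫)) := by
  unfold gaussAt
  rw [Measure.map_apply (measurable_const_add y) (halfspace_measurable x w c)]
  have hpre : (fun e : EuclideanSpace ℝ (Fin d) => y + e) ⁻¹' {z | ⟪z - x, w⟫ ≤ c}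
      = (fun e : EuclideanSpace ℝ (Fin d) => ⟪e, w⟫) ⁻¹' Set.Iic (c - ⟪y - x, w⟫) := by
    ext e
    simp only [Set.mem_preimage, Set.mem_setOf_eq, Set.mem_Iic]
    have h0 : y + e - x = (y - x) + e := by abel
    rw [h0, inner_add_left]
    constructor <;> intro <;> linarith
  rw [hpre, ← Measure.map_apply (measurable_innerR w) measurableSet_Iic,
    isoGaussian_map_inner]

lemma var_unit {d : ℕ} (w : EuclideanSpace ℝ (Fin d)) (hw : ‖w‖ = 1) (v : ℝ≥0) :
    (∑ i, (w i)^2).toNNReal * v = v := by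
  rw [sum_sq_eq_norm, hw, one_pow, Real.toNNReal_one, one_mul]

lemma gauss_sigma_Iic {σ : ℝ} (hσ : 0 < σ) (a : ℝ) :
    gaussianReal 0 (⟨σ^2, sq_nonneg σ⟩) (Set.Iic (σ * a)) = gaussianReal 0 1 (Set.Iic a) := by
  have h1 : (gaussianReal 0 1).map (fun t => σ * t) = gaussianReal 0 ⟨σ^2, sq_nonneg σ⟩ := by
    rw [gaussianReal_map_const_mul]
    congr 1
    · exact mul_zero σ
    · exact mul_one _
  rw [← h1, Measure.map_apply (measurable_const_mul σ) measurableSet_Iic]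
  congr 1
  ext t
  simp only [Set.mem_preimage, Set.mem_Iic]
  exact mul_le_mul_iff_right₀ hσ

end NPaux

open NPaux

open RealInnerProductSpace in
/-- Neyman–Pearson lemma for Gaussian shifts: among measurable sets of N(x,σ²I)-measure p,
the half-space orthogonal to δ minimizes the N(x+δ,σ²I)-measure, with minimum
Φ(Φ⁻¹(p) − ‖δ‖/σ). -/
theorem neyman_pearson_gaussian
    {d : ℕ} (σ : ℝ) (hσ : 0 < σ) (p : ℝ) (hp : p ∈ Set.Ioo (0 : ℝ) 1)
    (x δ : EuclideanSpace ℝ (Fin d)) (hδ : δ ≠ 0) :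
    (∀ S : Set (EuclideanSpace ℝ (Fin d)), MeasurableSet S →
      (gaussAt σ x S).toReal = p →
      Phi (PhiInv p - ‖δ‖ / σ) ≤ (gaussAt σ (x + δ) S).toReal) ∧
    (gaussAt σ x {z | ⟪z - x, (‖δ‖⁻¹ : ℝ) • δ⟫ ≤ σ * PhiInv p}).toReal = p ∧
    (gaussAt σ (x + δ) {z | ⟪z - x, (‖δ‖⁻¹ : ℝ) • δ⟫ ≤ σ * PhiInv p}).toReal
      = Phi (PhiInv p - ‖δ‖ / σ) := by
  have hδn : ‖δ‖ ≠ 0 := norm_ne_zero_iff.mpr hδ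
  have hδpos : 0 < ‖δ‖ := norm_pos_iff.mpr hδ
  set u : EuclideanSpace ℝ (Fin d) := (‖δ‖⁻¹ : ℝ) • δ with hu
  have hunorm : ‖u‖ = 1 := by
    rw [hu, norm_smul, norm_inv, norm_norm, inv_mul_cancel₀ hδn]
  set c : ℝ := σ * PhiInv p with hc
  set H : Set (EuclideanSpace ℝ (Fin d)) := {z | ⟪z - x, u⟫ ≤ c} with hH
  have hPhiInv : Phi (PhiInv p) = p := Function.invFun_eq (Phi_surjOn p hp)
  have hinner_xx : ⟪x - x, u⟫ = (0:ℝ) := by simp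
  have hH0 : gaussAt σ x H = gaussianReal 0 1 (Set.Iic (PhiInv p)) := by
    rw [hH, gaussAt_halfspace]; erw [var_unit u hunorm]; rw [hinner_xx, sub_zero, hc,
      gauss_sigma_Iic hσ]
  have hH0' : (gaussAt σ x H).toReal = p := by
    rw [hH0, ← Phi_eq_toReal]
    exact hPhiInv
  have hinner_dd : ⟪x + δ - x, u⟫ = ‖δ‖ := by
    have h0 : x + δ - x = δ := by abel
    rw [h0, hu, real_inner_smul_right, real_inner_self_eq_norm_mul_norm]
    field_simp
  have hH1 : gaussAt σ (x + δ) H = gaussianReal 0 1 (Set.Iic (PhiInv p - ‖δ‖/σ)) := by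
    rw [hH, gaussAt_halfspace]; erw [var_unit u hunorm]; rw [hinner_dd]
    have h0 : c - ‖δ‖ = σ * (PhiInv p - ‖δ‖/σ) := by
      rw [hc]
      field_simp
    rw [h0, gauss_sigma_Iic hσ]
  have hH1' : (gaussAt σ (x + δ) H).toReal = Phi (PhiInv p - ‖δ‖/σ) := by
    rw [hH1, ← Phi_eq_toReal]
  refine ⟨?_, hH0', hH1'⟩
  intro S hS hSp
  set μ₀ := gaussAt σ x with hμ₀
  set μ₁ := gaussAt σ (x + δ) with hμ₁
  set r : EuclideanSpace ℝ (Fin d) → ℝ≥0∞ :=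
    fun z => ENNReal.ofReal (rexp ((⟪z - x, δ⟫ - ‖δ‖^2/2) / σ^2)) with hrdef
  have hr : Measurable r := measurable_r x δ σ
  have hdens : μ₁ = μ₀.withDensity r := gaussAt_density hσ x δ
  set k : ℝ≥0∞ := ENNReal.ofReal (rexp ((‖δ‖ * c - ‖δ‖^2/2) / σ^2)) with hkdef
  have hδu : ∀ z : EuclideanSpace ℝ (Fin d), ⟪z - x, δ⟫ = ‖δ‖ * ⟪z - x, u⟫ := by
    intro z
    rw [hu, real_inner_smul_right, ← mul_assoc, mul_inv_cancel₀ hδn, one_mul]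
  have hklow : ∀ z ∈ S \ H, k ≤ r z := by
    intro z hz
    have hzH : ¬ (⟪z - x, u⟫ ≤ c) := hz.2
    push_neg at hzH
    rw [hrdef, hkdef]
    apply ENNReal.ofReal_le_ofReal
    apply Real.exp_le_exp.mpr
    apply div_le_div_of_nonneg_right ?_ (by positivity) |>.trans_eq rfl
    have := mul_le_mul_of_nonneg_left hzH.le (norm_nonneg δ)
    rw [hδu z]
    linarith
  have hkup : ∀ z ∈ H \ S, r z ≤ k := by
    intro z hz
    have hzH : ⟪z - x, u⟫ ≤ c := hz.1
    rw [hrdef, hkdef]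
    apply ENNReal.ofReal_le_ofReal
    apply Real.exp_le_exp.mpr
    apply div_le_div_of_nonneg_right ?_ (by positivity)
    have := mul_le_mul_of_nonneg_left hzH (norm_nonneg δ)
    rw [hδu z]
    linarith
  have hSH : MeasurableSet H := halfspace_measurable x u c
  have hμS : μ₀ S = μ₀ H :=
    (ENNReal.toReal_eq_toReal_iff' (measure_ne_top _ _) (measure_ne_top _ _)).mp
      (hSp.trans hH0'.symm)
  have hdiff : μ₀ (S \ H) = μ₀ (H \ S) := by
    have h1 := measure_inter_add_diff (μ := μ₀) S hSH
    have h2 := measure_inter_add_diff (μ := μ₀) H hS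
    rw [Set.inter_comm H S] at h2
    have h3 : μ₀ (S ∩ H) + μ₀ (S \ H) = μ₀ (S ∩ H) + μ₀ (H \ S) := by
      rw [h1, h2, hμS]
    exact (ENNReal.add_right_inj (measure_ne_top _ _)).mp h3
  have e1 : k * μ₀ (S \ H) ≤ μ₁ (S \ H) := by
    rw [hdens, withDensity_apply _ (hS.diff hSH)]
    calc k * μ₀ (S \ H) = ∫⁻ _z in S \ H, k ∂μ₀ := by
          rw [setLIntegral_const, mul_comm]
      _ ≤ ∫⁻ z in S \ H, r z ∂μ₀ := setLIntegral_mono hr hklow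
  have e2 : μ₁ (H \ S) ≤ k * μ₀ (H \ S) := by
    rw [hdens, withDensity_apply _ (hSH.diff hS)]
    calc ∫⁻ z in H \ S, r z ∂μ₀ ≤ ∫⁻ _z in H \ S, k ∂μ₀ :=
          setLIntegral_mono measurable_const hkup
      _ = k * μ₀ (H \ S) := by rw [setLIntegral_const, mul_comm]
  have core : μ₁ H ≤ μ₁ S := by
    have d1 := measure_inter_add_diff (μ := μ₁) S hSH
    have d2 := measure_inter_add_diff (μ := μ₁) H hS
    calc μ₁ H = μ₁ (H ∩ S) + μ₁ (H \ S) := d2.symm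
      _ ≤ μ₁ (H ∩ S) + k * μ₀ (H \ S) := add_le_add_right e2 _
      _ = μ₁ (S ∩ H) + k * μ₀ (S \ H) := by rw [Set.inter_comm H S, hdiff]
      _ ≤ μ₁ (S ∩ H) + μ₁ (S \ H) := add_le_add_right e1 _
      _ = μ₁ S := d1
  rw [← hH1']
  exact ENNReal.toReal_mono (measure_ne_top _ _) core
end
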